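/- Let k be a field and consider the ring homomorphism φ: k[[x,y]] → k[[t₁]] × k[[t₂]] defined by x ↦ (t₁, t₂), y ↦ (t₁², 0). Then the kernel of φ is the principal ideal generated by y² − yx². -/

import Mathlib

/-- Product topology on multivariate power series, coefficients discrete. -/
noncomputable def mvPSTop (σ k : Type) [TopologicalSpace k] :
    TopologicalSpace (MvPowerSeries σ k) :=
  inferInstanceAs (TopologicalSpace ((σ →₀ ℕ) → k))

/-- Product topology on power series in one variable. -/
noncomputable def psTop (k : Type) [TopologicalSpace k] :
    TopologicalSpace (PowerSeries k) :=
  inferInstanceAs (TopologicalSpace ((Unit →₀ ℕ) → k))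

/-- Topology on the product of two power series rings. -/
noncomputable def psProdTop (k : Type) [TopologicalSpace k] :
    TopologicalSpace (PowerSeries k × PowerSeries k) :=
  @instTopologicalSpaceProd _ _ (psTop k) (psTop k)

open MvPowerSeries Finsupp
set_option linter.unusedSectionVars false
set_option maxHeartbeats 1000000

namespace Stmt1Aux

variable {k : Type} [Field k] [TopologicalSpace k] [DiscreteTopology k]

/-- exponent `(n - 2j, j)` -/
noncomputable def D (n j : ℕ) : Fin 2 →₀ ℕ := single 0 (n - 2*j) + single 1 j

lemma D_apply0 (n j : ℕ) : D n j 0 = n - 2*j := by simp [D, Finsupp.single_apply]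
lemma D_apply1 (n j : ℕ) : D n j 1 = j := by simp [D, Finsupp.single_apply]

lemma fin2_decomp (e : Fin 2 →₀ ℕ) : e = single 0 (e 0) + single 1 (e 1) := by
  ext i
  fin_cases i <;> simp [Finsupp.single_apply]

lemma fin2_eq_iff (e : Fin 2 →₀ ℕ) (a b : ℕ) :
    e = single 0 a + single 1 b ↔ e 0 = a ∧ e 1 = b := by
  constructor
  · rintro rfl; simp [Finsupp.single_apply]
  · rintro ⟨h0, h1⟩
    ext i; fin_cases i <;> simp [Finsupp.single_apply, h0, h1]

lemma loc_const (F : MvPowerSeries (Fin 2) k → k)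
    (hF : @Continuous _ _ (mvPSTop (Fin 2) k) _ F) (f : MvPowerSeries (Fin 2) k) :
    ∃ E : Finset (Fin 2 →₀ ℕ), ∀ g : MvPowerSeries (Fin 2) k,
      (∀ d ∈ E, MvPowerSeries.coeff d g = MvPowerSeries.coeff d f) → F g = F f := by
  letI : TopologicalSpace (MvPowerSeries (Fin 2) k) := mvPSTop (Fin 2) k
  have hopen : @IsOpen ((Fin 2 →₀ ℕ) → k) Pi.topologicalSpace (F ⁻¹' {F f}) :=
    hF.isOpen_preimage _ (isOpen_discrete _)
  rw [isOpen_pi_iff] at hopen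
  obtain ⟨I, u, hu, hI⟩ := hopen f rfl
  refine ⟨I, fun g hg => ?_⟩
  have : g ∈ (I : Set (Fin 2 →₀ ℕ)).pi u := by
    intro a ha
    have := hg a ha
    rw [MvPowerSeries.coeff_apply, MvPowerSeries.coeff_apply] at this
    rw [this]
    exact (hu a (by exact_mod_cast ha)).2
  exact hI this


variable (φ : MvPowerSeries (Fin 2) k →ₐ[k] PowerSeries k × PowerSeries k)

lemma phi_monomial
    (hx : φ (MvPowerSeries.X 0) = (PowerSeries.X, PowerSeries.X))
    (hy : φ (MvPowerSeries.X 1) = (PowerSeries.X ^ 2, 0))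
    (d : Fin 2 →₀ ℕ) (c : k) :
    φ (monomial d c) =
      (c • PowerSeries.X ^ (d 0 + 2 * d 1),
       if d 1 = 0 then c • PowerSeries.X ^ (d 0) else 0) := by
  have h1 : (monomial d c : MvPowerSeries (Fin 2) k)
      = c • ((X 0 : MvPowerSeries (Fin 2) k) ^ (d 0) * X 1 ^ (d 1)) := by
    rw [X_pow_eq, X_pow_eq, monomial_mul_monomial, one_mul, ← fin2_decomp,
      ← map_smul, smul_eq_mul, mul_one]
  rw [h1, map_smul, map_mul, map_pow, map_pow, hx, hy]
  have h2 : PowerSeries.X (R := k) ^ d 0 * (PowerSeries.X ^ 2) ^ d 1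
      = PowerSeries.X ^ (d 0 + 2 * d 1) := by
    rw [← pow_mul, ← pow_add]
  rcases Nat.eq_zero_or_pos (d 1) with h | h
  · simp [h, Prod.ext_iff, Prod.smul_def, h2]
  · simp [Nat.pos_iff_ne_zero.mp h, Prod.ext_iff, Prod.smul_def, h2,
      zero_pow (Nat.pos_iff_ne_zero.mp h)]



lemma cont_coeff_fst (hcont : @Continuous _ _ (mvPSTop (Fin 2) k) (psProdTop k) φ) (n : ℕ) :
    @Continuous _ _ (mvPSTop (Fin 2) k) _
      (fun g => PowerSeries.coeff n (φ g).1) := by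
  letI := mvPSTop (Fin 2) k
  letI := psTop k
  have h2 : @Continuous _ _ (psProdTop k) (psTop k)
      (Prod.fst : PowerSeries k × PowerSeries k → PowerSeries k) :=
    @continuous_fst _ _ (psTop k) (psTop k)
  have h3 : @Continuous _ _ (psTop k) _
      (fun p : PowerSeries k => PowerSeries.coeff n p) :=
    @continuous_apply (Unit →₀ ℕ) (fun _ => k) _ (Finsupp.single () n)
  exact h3.comp (h2.comp hcont)

lemma cont_coeff_snd (hcont : @Continuous _ _ (mvPSTop (Fin 2) k) (psProdTop k) φ) (n : ℕ) :
    @Continuous _ _ (mvPSTop (Fin 2) k) _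
      (fun g => PowerSeries.coeff n (φ g).2) := by
  letI := mvPSTop (Fin 2) k
  letI := psTop k
  have h2 : @Continuous _ _ (psProdTop k) (psTop k)
      (Prod.snd : PowerSeries k × PowerSeries k → PowerSeries k) :=
    @continuous_snd _ _ (psTop k) (psTop k)
  have h3 : @Continuous _ _ (psTop k) _
      (fun p : PowerSeries k => PowerSeries.coeff n p) :=
    @continuous_apply (Unit →₀ ℕ) (fun _ => k) _ (Finsupp.single () n)
  exact h3.comp (h2.comp hcont)


lemma coeff_phi_fst
    (hcont : @Continuous _ _ (mvPSTop (Fin 2) k) (psProdTop k) φ)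
    (hx : φ (MvPowerSeries.X 0) = (PowerSeries.X, PowerSeries.X))
    (hy : φ (MvPowerSeries.X 1) = (PowerSeries.X ^ 2, 0))
    (f : MvPowerSeries (Fin 2) k) (n : ℕ) :
    PowerSeries.coeff n (φ f).1 =
      ∑ j ∈ Finset.range (n / 2 + 1), MvPowerSeries.coeff (D n j) f := by
  classical
  obtain ⟨E, hE⟩ := loc_const (fun g => PowerSeries.coeff n (φ g).1)
    (cont_coeff_fst φ hcont n) f
  set E' : Finset (Fin 2 →₀ ℕ) := E ∪ (Finset.range (n / 2 + 1)).image (D n) with hE'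
  set g : MvPowerSeries (Fin 2) k :=
    ∑ d ∈ E', (monomial d (MvPowerSeries.coeff d f)) with hg
  have hgc : ∀ e, MvPowerSeries.coeff e g =
      if e ∈ E' then MvPowerSeries.coeff e f else 0 := by
    intro e
    rw [hg, map_sum]
    simp only [coeff_monomial]
    rw [Finset.sum_ite_eq E' e (fun d => MvPowerSeries.coeff d f)]
  have key : PowerSeries.coeff n (φ g).1 = PowerSeries.coeff n (φ f).1 :=
    hE g (fun d hd => by rw [hgc d, if_pos (Finset.mem_union_left _ hd)])
  rw [← key, hg, map_sum]
  have : ((∑ d ∈ E', φ (monomial d (MvPowerSeries.coeff d f))).1) =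
      ∑ d ∈ E', (φ (monomial d (MvPowerSeries.coeff d f))).1 :=
    Prod.fst_sum
  rw [this, map_sum]
  have hterm : ∀ d ∈ E', PowerSeries.coeff n
      ((φ (monomial d (MvPowerSeries.coeff d f))).1) =
      if d 0 + 2 * d 1 = n then MvPowerSeries.coeff d f else 0 := by
    intro d _
    rw [phi_monomial φ hx hy]
    simp only [PowerSeries.coeff_smul, smul_eq_mul, PowerSeries.coeff_X_pow]
    split_ifs with h1 h2 h2
    · rw [mul_one]
    · exact absurd h1.symm h2
    · exact absurd h2.symm h1
    · rw [mul_zero]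
  rw [Finset.sum_congr rfl hterm, Finset.sum_ite, Finset.sum_const_zero, add_zero]
  have hset : E'.filter (fun d => d 0 + 2 * d 1 = n)
      = (Finset.range (n / 2 + 1)).image (D n) := by
    ext d
    simp only [Finset.mem_filter, Finset.mem_image, Finset.mem_range]
    constructor
    · rintro ⟨_, hP⟩
      refine ⟨d 1, by omega, ?_⟩
      ext i
      fin_cases i <;> simp [D, Finsupp.single_apply] <;> omega
    · rintro ⟨j, hj, rfl⟩
      have h2j : 2 * j ≤ n := by omega
      constructor
      · exact Finset.mem_union_right _ (Finset.mem_image.mpr ⟨j, Finset.mem_range.mpr hj, rfl⟩)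
      · rw [D_apply0, D_apply1]; omega
  rw [hset]
  rw [Finset.sum_image ?inj]
  case inj =>
    intro a _ b _ hab
    have := congrArg (fun e : Fin 2 →₀ ℕ => e 1) hab
    simpa [D_apply1] using this

lemma coeff_phi_snd
    (hcont : @Continuous _ _ (mvPSTop (Fin 2) k) (psProdTop k) φ)
    (hx : φ (MvPowerSeries.X 0) = (PowerSeries.X, PowerSeries.X))
    (hy : φ (MvPowerSeries.X 1) = (PowerSeries.X ^ 2, 0))
    (f : MvPowerSeries (Fin 2) k) (n : ℕ) :
    PowerSeries.coeff n (φ f).2 = MvPowerSeries.coeff (single 0 n) f := by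
  classical
  obtain ⟨E, hE⟩ := loc_const (fun g => PowerSeries.coeff n (φ g).2)
    (cont_coeff_snd φ hcont n) f
  set E' : Finset (Fin 2 →₀ ℕ) := insert (single 0 n) E with hE'
  set g : MvPowerSeries (Fin 2) k :=
    ∑ d ∈ E', (monomial d (MvPowerSeries.coeff d f)) with hg
  have hgc : ∀ e, MvPowerSeries.coeff e g =
      if e ∈ E' then MvPowerSeries.coeff e f else 0 := by
    intro e
    rw [hg, map_sum]
    simp only [coeff_monomial]
    rw [Finset.sum_ite_eq E' e (fun d => MvPowerSeries.coeff d f)]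
  have key : PowerSeries.coeff n (φ g).2 = PowerSeries.coeff n (φ f).2 :=
    hE g (fun d hd => by rw [hgc d, if_pos (Finset.mem_insert_of_mem hd)])
  rw [← key, hg, map_sum]
  have : ((∑ d ∈ E', φ (monomial d (MvPowerSeries.coeff d f))).2) =
      ∑ d ∈ E', (φ (monomial d (MvPowerSeries.coeff d f))).2 :=
    Prod.snd_sum
  rw [this, map_sum]
  have hterm : ∀ d ∈ E', PowerSeries.coeff n
      ((φ (monomial d (MvPowerSeries.coeff d f))).2) =
      if d = single 0 n then MvPowerSeries.coeff d f else 0 := by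
    intro d _
    rw [phi_monomial φ hx hy]
    by_cases h1 : d 1 = 0
    · rw [if_pos h1, PowerSeries.coeff_smul, smul_eq_mul, PowerSeries.coeff_X_pow]
      by_cases h0 : d 0 = n
      · rw [if_pos h0.symm, mul_one, if_pos]
        ext i; fin_cases i <;> simp [Finsupp.single_apply, h0, h1]
      · rw [if_neg (fun h => h0 h.symm), mul_zero, if_neg]
        intro h; apply h0
        rw [h]; simp [Finsupp.single_apply]
    · rw [if_neg h1, map_zero, if_neg, eq_comm]
      intro h; apply h1; rw [h]; simp [Finsupp.single_apply]
  rw [Finset.sum_congr rfl hterm, Finset.sum_ite_eq' E' (single 0 n)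
    (fun d => MvPowerSeries.coeff d f), if_pos (Finset.mem_insert_self _ _)]


/-- The quotient in division of `f` by `y² - y x²`. -/
noncomputable def Q (f : MvPowerSeries (Fin 2) k) : MvPowerSeries (Fin 2) k :=
  fun e => ∑ m ∈ Finset.range (e 0 / 2 + 1),
    MvPowerSeries.coeff (single 0 (e 0 - 2*m) + single 1 (e 1 + 2 + m)) f

lemma coeff_Q (f : MvPowerSeries (Fin 2) k) (e : Fin 2 →₀ ℕ) :
    MvPowerSeries.coeff e (Q f) = ∑ m ∈ Finset.range (e 0 / 2 + 1),
      MvPowerSeries.coeff (single 0 (e 0 - 2*m) + single 1 (e 1 + 2 + m)) f := rfl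

lemma coeff_QU (f : MvPowerSeries (Fin 2) k) (e : Fin 2 →₀ ℕ) (he : 2 ≤ e 1) :
    MvPowerSeries.coeff e
      (Q f * (MvPowerSeries.X 1 ^ 2 - MvPowerSeries.X 1 * MvPowerSeries.X 0 ^ 2)) =
    MvPowerSeries.coeff e f := by
  classical
  set G : ℕ → k := fun m =>
    MvPowerSeries.coeff (single 0 (e 0 - 2*m) + single 1 (e 1 + m)) f with hG
  have hU1 : (MvPowerSeries.X 1 : MvPowerSeries (Fin 2) k) ^ 2
      = monomial (single 1 2) 1 := X_pow_eq _ _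
  have hU2 : (MvPowerSeries.X 1 : MvPowerSeries (Fin 2) k) * MvPowerSeries.X 0 ^ 2
      = monomial (single 1 1 + single 0 2) 1 := by
    rw [show (MvPowerSeries.X 1 : MvPowerSeries (Fin 2) k) = MvPowerSeries.X 1 ^ 1 from
      (pow_one _).symm, X_pow_eq, X_pow_eq, monomial_mul_monomial, one_mul]
  rw [mul_sub, map_sub, hU1, hU2, coeff_mul_monomial, coeff_mul_monomial]
  rw [if_pos (single_le_iff.mpr he)]
  have ha : ((e - single 1 2 : Fin 2 →₀ ℕ)) 0 = e 0 := by
    rw [tsub_apply]; simp [Finsupp.single_apply]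
  have hb : ((e - single 1 2 : Fin 2 →₀ ℕ)) 1 = e 1 - 2 := by
    rw [tsub_apply]; simp [Finsupp.single_apply]
  have hfirst : MvPowerSeries.coeff (e - single 1 2) (Q f)
      = ∑ m ∈ Finset.range (e 0 / 2 + 1), G m := by
    rw [coeff_Q, ha, hb]
    refine Finset.sum_congr rfl (fun m _ => ?_)
    rw [hG, show e 1 - 2 + 2 + m = e 1 + m from by omega]
  rw [hfirst, mul_one]
  by_cases hA : 2 ≤ e 0
  · rw [if_pos]
    swap
    · rw [Finsupp.le_def]
      intro i
      fin_cases i <;> simp [Finsupp.single_apply] <;> omega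
    have ha2 : ((e - (single 1 1 + single 0 2) : Fin 2 →₀ ℕ)) 0 = e 0 - 2 := by
      rw [tsub_apply]; simp [Finsupp.single_apply]
    have hb2 : ((e - (single 1 1 + single 0 2) : Fin 2 →₀ ℕ)) 1 = e 1 - 1 := by
      rw [tsub_apply]; simp [Finsupp.single_apply]
    have hsecond : MvPowerSeries.coeff (e - (single 1 1 + single 0 2)) (Q f)
        = ∑ m ∈ Finset.range ((e 0 - 2) / 2 + 1), G (m + 1) := by
      rw [coeff_Q, ha2, hb2]
      refine Finset.sum_congr rfl (fun m _ => ?_)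
      rw [hG, show e 0 - 2 - 2*m = e 0 - 2*(m+1) from by omega,
        show e 1 - 1 + 2 + m = e 1 + (m+1) from by omega]
    rw [hsecond, mul_one]
    have hdiv : e 0 / 2 = (e 0 - 2) / 2 + 1 := by omega
    rw [hdiv, Finset.sum_range_succ']
    have hG0 : G 0 = MvPowerSeries.coeff e f := by
      rw [hG]
      congr 1
      conv_rhs => rw [fin2_decomp e]
      congr 2 <;> omega
    rw [← hG0]
    ring
  · rw [if_neg]
    swap
    · rw [Finsupp.le_def]
      push_neg
      refine ⟨0, ?_⟩
      simp [Finsupp.single_apply]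
      omega
    have h02 : e 0 / 2 = 0 := by omega
    rw [h02, sub_zero, Finset.sum_range_one]
    rw [hG]
    congr 1
    conv_rhs => rw [fin2_decomp e]
    congr 2 <;> omega


lemma phi_U
    (hx : φ (MvPowerSeries.X 0) = (PowerSeries.X, PowerSeries.X))
    (hy : φ (MvPowerSeries.X 1) = (PowerSeries.X ^ 2, 0)) :
    φ (MvPowerSeries.X 1 ^ 2 - MvPowerSeries.X 1 * MvPowerSeries.X 0 ^ 2) = 0 := by
  rw [map_sub, map_pow, map_mul, map_pow, hx, hy]
  refine Prod.ext ?_ ?_ <;> simp [pow_succ] <;> ring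

theorem main
    (hcont : @Continuous _ _ (mvPSTop (Fin 2) k) (psProdTop k) φ)
    (hx : φ (MvPowerSeries.X 0) = (PowerSeries.X, PowerSeries.X))
    (hy : φ (MvPowerSeries.X 1) = (PowerSeries.X ^ 2, 0)) :
    RingHom.ker φ =
      Ideal.span {MvPowerSeries.X 1 ^ 2 -
        MvPowerSeries.X 1 * MvPowerSeries.X 0 ^ 2} := by
  classical
  set U : MvPowerSeries (Fin 2) k :=
    MvPowerSeries.X 1 ^ 2 - MvPowerSeries.X 1 * MvPowerSeries.X 0 ^ 2 with hU
  ext f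
  rw [RingHom.mem_ker, Ideal.mem_span_singleton]
  constructor
  · intro hf
    set r : MvPowerSeries (Fin 2) k := f - Q f * U with hr
    have hQU0 : φ (Q f * U) = 0 := by
      rw [map_mul, phi_U φ hx hy, mul_zero]
    have hrk : φ r = 0 := by
      rw [hr, map_sub, hf, hQU0, sub_zero]
    have hhigh : ∀ e : Fin 2 →₀ ℕ, 2 ≤ e 1 → MvPowerSeries.coeff e r = 0 := by
      intro e he
      rw [hr, map_sub, coeff_QU f e he, sub_self]
    have h0 : ∀ n : ℕ, MvPowerSeries.coeff (single 0 n) r = 0 := by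
      intro n
      have := coeff_phi_snd φ hcont hx hy r n
      rw [hrk] at this
      simpa using this.symm
    have h1 : ∀ a : ℕ, MvPowerSeries.coeff (single 0 a + single 1 1) r = 0 := by
      intro a
      have hsum := coeff_phi_fst φ hcont hx hy r (a + 2)
      rw [hrk] at hsum
      simp only [Prod.fst_zero, map_zero] at hsum
      have hone : MvPowerSeries.coeff (D (a + 2) 1) r
          = MvPowerSeries.coeff (single 0 a + single 1 1) r := by
        unfold D
        rw [show a + 2 - 2*1 = a from by omega]
      have hsingle : ∑ j ∈ Finset.range ((a + 2) / 2 + 1), MvPowerSeries.coeff (D (a+2) j) r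
          = MvPowerSeries.coeff (D (a + 2) 1) r := by
        refine Finset.sum_eq_single 1 ?_ ?_
        · intro j _ hj
          rcases Nat.eq_zero_or_pos j with rfl | hjpos
          · have : D (a + 2) 0 = single 0 (a + 2) := by
              unfold D
              simp
            rw [this]
            exact h0 (a + 2)
          · have hj2 : 2 ≤ j := by omega
            exact hhigh _ (by rw [D_apply1]; exact hj2)
        · intro hmem
          exfalso
          apply hmem
          rw [Finset.mem_range]
          omega
      rw [hsingle, hone] at hsum
      exact hsum.symm
    have hr0 : r = 0 := by
      ext e
      rw [map_zero]
      rcases Nat.lt_or_ge (e 1) 2 with hlt | hge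
      · rcases (by omega : e 1 = 0 ∨ e 1 = 1) with h | h
        · have he : e = single 0 (e 0) := by
            ext i; fin_cases i <;> simp [Finsupp.single_apply, h]
          rw [he]
          exact h0 _
        · have he : e = single 0 (e 0) + single 1 1 := by
            ext i; fin_cases i <;> simp [Finsupp.single_apply, h]
          rw [he]
          exact h1 _
      · exact hhigh e hge
    have hsub : f - Q f * U = 0 := hr0
    exact ⟨Q f, by linear_combination hsub⟩
  · rintro ⟨c, rfl⟩
    rw [map_mul, phi_U φ hx hy, zero_mul]

end Stmt1Aux


/-- Let `k` be a field and `φ : k[[x,y]] → k[[t₁]] × k[[t₂]]` the (unique)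
continuous `k`-algebra homomorphism with `x ↦ (t₁, t₂)`, `y ↦ (t₁², 0)`.
Then `ker φ = (y² − y·x²)`. -/
theorem stmt1 (k : Type) [Field k] [TopologicalSpace k] [DiscreteTopology k]
    (φ : MvPowerSeries (Fin 2) k →ₐ[k] PowerSeries k × PowerSeries k)
    (hcont : @Continuous _ _ (mvPSTop (Fin 2) k) (psProdTop k) φ)
    (hx : φ (MvPowerSeries.X 0) = (PowerSeries.X, PowerSeries.X))
    (hy : φ (MvPowerSeries.X 1) = (PowerSeries.X ^ 2, 0)) :
    RingHom.ker φ =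
      Ideal.span {MvPowerSeries.X 1 ^ 2 -
        MvPowerSeries.X 1 * MvPowerSeries.X 0 ^ 2} := by
  exact Stmt1Aux.main φ hcont hx hy
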